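/- arXiv:1808.09305 — 3 statements merged into one kernel-verified Lean document; each statement's English description precedes it below -/
import Mathlib

section
/- Let U ⊆ ℝ^N be open, 1 ≤ p < ∞, and 0 < s < 1. There exists a constant c = c(N, s, p) > 0 with the following property: whenever f ∈ L¹_loc(U), B(x,r) ⊆ U, and E ⊆ B(x,r) is a Lebesgue measurable set of positive Lebesgue measure, then ∫_{B(x,r)} |f(y) − f_E|^p dy ≤ c (r^{sp+N} / 𝓛^N(E)) ∫_{B(x,r)} ∫_E |f(y) − f(z)|^p / |y − z|^{sp+N} dz dy, where f_E = (1/𝓛^N(E)) ∫_E f(z) dz. -/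
open MeasureTheory Metric
open scoped ENNReal

lemma ker_bound {t d D A : ℝ} (ht : 0 ≤ t) (ht0 : d = 0 → t = 0) (hd : 0 ≤ d) (hdD : d ≤ D)
    (hA : 0 < A) :
    ENNReal.ofReal t ≤ ENNReal.ofReal (D ^ A) * ENNReal.ofReal (t / d ^ A) := by
  rcases eq_or_lt_of_le hd with h0 | h0
  · simp [ht0 h0.symm]
  · rw [← ENNReal.ofReal_mul (Real.rpow_nonneg (h0.le.trans hdD) A)]
    apply ENNReal.ofReal_le_ofReal
    have hdA : (0:ℝ) < d ^ A := Real.rpow_pos_of_pos h0 A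
    have hDA : d ^ A ≤ D ^ A := Real.rpow_le_rpow hd hdD hA.le
    calc t = t * (d ^ A / d ^ A) := by rw [div_self hdA.ne', mul_one]
    _ = d ^ A * (t / d ^ A) := by ring
    _ ≤ D ^ A * (t / d ^ A) := by
        apply mul_le_mul_of_nonneg_right hDA (div_nonneg ht hdA.le)

lemma holder_pow {α : Type*} [MeasurableSpace α] (μ : Measure α) {p : ℝ} (hp : 1 ≤ p)
    {G : α → ℝ≥0∞} (hG : AEMeasurable G μ) :
    (∫⁻ a, G a ∂μ) ^ p ≤ μ Set.univ ^ (p - 1) * ∫⁻ a, G a ^ p ∂μ := by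
  rcases eq_or_lt_of_le hp with h1 | h1
  · simp [← h1]
  · have hpq : p.HolderConjugate (Real.conjExponent p) := Real.HolderConjugate.conjExponent h1
    have hq : Real.conjExponent p = p / (p - 1) := rfl
    have h := ENNReal.lintegral_mul_le_Lp_mul_Lq μ hpq hG (aemeasurable_const (b := (1:ℝ≥0∞)))
    simp only [Pi.mul_apply, Pi.one_apply, mul_one, ENNReal.one_rpow, lintegral_one] at h
    have h2 : (∫⁻ a, G a ∂μ) ^ p ≤
        ((∫⁻ a, G a ^ p ∂μ) ^ (1 / p) * μ Set.univ ^ (1 / Real.conjExponent p)) ^ p :=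
      ENNReal.rpow_le_rpow h (by linarith)
    refine h2.trans_eq ?_
    rw [ENNReal.mul_rpow_of_nonneg _ _ (by linarith), ← ENNReal.rpow_mul, ← ENNReal.rpow_mul]
    have hp0 : p ≠ 0 := by linarith
    have : (1 / p) * p = 1 := by field_simp
    have h3 : (1 / Real.conjExponent p) * p = p - 1 := by
      rw [hq]; field_simp
    rw [this, h3, ENNReal.rpow_one, mul_comm]

lemma avg_bound {α : Type*} [MeasurableSpace α] {μ : Measure α} {p : ℝ} (hp : 1 ≤ p)
    (hμ0 : μ Set.univ ≠ 0) (hμt : μ Set.univ ≠ ⊤)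
    {g : α → ℝ} (hgi : Integrable g μ) :
    ENNReal.ofReal (|(∫ z, g z ∂μ) / (μ Set.univ).toReal| ^ p)
      ≤ (μ Set.univ)⁻¹ * ∫⁻ z, ENNReal.ofReal (|g z| ^ p) ∂μ := by
  have hp0 : (0:ℝ) ≤ p := by linarith
  set M := (μ Set.univ).toReal with hM
  have hM0 : 0 < M := ENNReal.toReal_pos hμ0 hμt
  have hia : (0:ℝ) ≤ ∫ z, |g z| ∂μ := integral_nonneg fun z => abs_nonneg _
  have habs : |(∫ z, g z ∂μ) / M| ≤ (∫ z, |g z| ∂μ) / M := by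
    rw [abs_div, abs_of_pos hM0]
    gcongr
    simpa [Real.norm_eq_abs] using norm_integral_le_integral_norm (μ := μ) g
  have h1 : ENNReal.ofReal (|(∫ z, g z ∂μ) / M| ^ p)
      ≤ ENNReal.ofReal (((∫ z, |g z| ∂μ) / M) ^ p) :=
    ENNReal.ofReal_le_ofReal (Real.rpow_le_rpow (abs_nonneg _) habs hp0)
  refine h1.trans ?_
  have h2 : ENNReal.ofReal (((∫ z, |g z| ∂μ) / M) ^ p)
      = (∫⁻ z, ENNReal.ofReal |g z| ∂μ) ^ p / μ Set.univ ^ p := by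
    rw [Real.div_rpow hia hM0.le, ENNReal.ofReal_div_of_pos (Real.rpow_pos_of_pos hM0 p),
      ← ENNReal.ofReal_rpow_of_nonneg hia hp0, ← ENNReal.ofReal_rpow_of_nonneg hM0.le hp0,
      hM, ENNReal.ofReal_toReal hμt,
      ofReal_integral_eq_lintegral_ofReal hgi.abs (Filter.Eventually.of_forall fun z => abs_nonneg _)]
  rw [h2]
  have hG : AEMeasurable (fun z => ENNReal.ofReal |g z|) μ :=
    hgi.abs.aestronglyMeasurable.aemeasurable.ennreal_ofReal
  have h3 := holder_pow μ hp hG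
  have h4 : ∀ z : α, ENNReal.ofReal |g z| ^ p = ENNReal.ofReal (|g z| ^ p) := fun z =>
    ENNReal.ofReal_rpow_of_nonneg (abs_nonneg _) hp0
  simp only [h4] at h3
  calc (∫⁻ z, ENNReal.ofReal |g z| ∂μ) ^ p / μ Set.univ ^ p
      ≤ (μ Set.univ ^ (p - 1) * ∫⁻ z, ENNReal.ofReal (|g z| ^ p) ∂μ) / μ Set.univ ^ p :=
        ENNReal.div_le_div_right h3 _
    _ = (μ Set.univ)⁻¹ * ∫⁻ z, ENNReal.ofReal (|g z| ^ p) ∂μ := by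
        rw [div_eq_mul_inv, ← ENNReal.rpow_neg, mul_comm, ← mul_assoc,
          ← ENNReal.rpow_add _ _ hμ0 hμt, show -p + (p - 1) = -1 by ring,
          ENNReal.rpow_neg_one]

/-- Let `U ⊆ ℝ^N` be open, `1 ≤ p < ∞`, `0 < s < 1`.  There is a
constant `c = c(N,s,p) > 0` such that whenever `f ∈ L¹_loc(U)`, `B(x,r) ⊆ U`, and
`E ⊆ B(x,r)` is Lebesgue measurable with `𝓛^N(E) > 0`, then
`∫_{B(x,r)} |f(y) - f_E|^p dy
  ≤ c (r^{sp+N}/𝓛^N(E)) ∫_{B(x,r)} ∫_E |f(y)-f(z)|^p / |y-z|^{sp+N} dz dy`,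
where `f_E` is the average of `f` over `E`. -/
theorem statement6 (N : ℕ) (p s : ℝ) (hp : 1 ≤ p) (hs0 : 0 < s) (hs1 : s < 1) :
    ∃ c : ℝ, 0 < c ∧
      ∀ (U : Set (EuclideanSpace ℝ (Fin N))), IsOpen U →
      ∀ f : EuclideanSpace ℝ (Fin N) → ℝ, LocallyIntegrableOn f U →
      ∀ (x : EuclideanSpace ℝ (Fin N)) (r : ℝ), Metric.ball x r ⊆ U →
      ∀ E : Set (EuclideanSpace ℝ (Fin N)), E ⊆ Metric.ball x r →
        MeasurableSet E → 0 < volume E →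
        (∫⁻ y in Metric.ball x r,
            ENNReal.ofReal (|f y - (∫ z in E, f z) / (volume E).toReal| ^ p))
          ≤ ENNReal.ofReal c * (ENNReal.ofReal (r ^ (s * p + N)) / volume E) *
            ∫⁻ y in Metric.ball x r, ∫⁻ z in E,
              ENNReal.ofReal (|f y - f z| ^ p / dist y z ^ (s * p + N)) := by
  have hp0 : 0 < p := by linarith
  set A := s * p + N with hAdef
  have hA : 0 < A := by positivity
  refine ⟨2 ^ A, by positivity, ?_⟩
  intro U hU f hf x r hBU E hEB hE hE0
  -- basic facts
  obtain ⟨z0, hz0⟩ : E.Nonempty := nonempty_of_measure_ne_zero hE0.ne'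
  have hr : 0 < r := lt_of_le_of_lt dist_nonneg (mem_ball.mp (hEB hz0))
  have hEt : volume E ≠ ⊤ :=
    ((measure_mono (hEB.trans (Set.Subset.refl _))).trans_lt measure_ball_lt_top).ne
  -- kernel bound
  have key : ∀ y ∈ Metric.ball x r, ∀ z ∈ E,
      ENNReal.ofReal (|f y - f z| ^ p)
        ≤ ENNReal.ofReal ((2 * r) ^ A) * ENNReal.ofReal (|f y - f z| ^ p / dist y z ^ A) := by
    intro y hy z hz
    refine ker_bound (Real.rpow_nonneg (abs_nonneg _) p) ?_ dist_nonneg ?_ hA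
    · intro hd
      have hyz : y = z := by rwa [dist_eq_zero] at hd
      simp [hyz, Real.zero_rpow hp0.ne']
    · have h1 : dist y z ≤ dist y x + dist x z := dist_triangle _ _ _
      have h2 : dist y x < r := mem_ball.mp hy
      have h3 : dist x z < r := by
        have := mem_ball.mp (hEB hz); rwa [dist_comm]
      linarith
  set I := ∫⁻ y in Metric.ball x r, ∫⁻ z in E,
      ENNReal.ofReal (|f y - f z| ^ p / dist y z ^ A) with hIdef
  by_cases hI : I = ⊤
  · rw [hI, ENNReal.mul_top]
    · exact le_top
    · refine mul_ne_zero ?_ ?_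
      · simpa using (Real.rpow_pos_of_pos two_pos A)
      · exact (ENNReal.div_pos (by simpa using Real.rpow_pos_of_pos hr A) hEt).ne'
  -- I finite: get a point y₀ with finite inner integral
  have hy0 : ∃ y₀ ∈ Metric.ball x r,
      (∫⁻ z in E, ENNReal.ofReal (|f y₀ - f z| ^ p / dist y₀ z ^ A)) ≠ ⊤ := by
    by_contra h
    push_neg at h
    apply hI
    have hle : ∫⁻ _ in Metric.ball x r, (⊤:ℝ≥0∞) ≤ I := by
      refine lintegral_mono_ae ?_
      filter_upwards [ae_restrict_mem measurableSet_ball] with y hy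
      exact (h y hy).ge
    have hB0 : volume (Metric.ball x r) ≠ 0 :=
      fun h0 => hE0.ne' (measure_mono_null hEB h0)
    rw [setLIntegral_const, ENNReal.top_mul hB0] at hle
    exact top_le_iff.mp hle
  obtain ⟨y₀, hy₀B, hy₀⟩ := hy0
  -- f is integrable on E
  have haesm : AEStronglyMeasurable f (volume.restrict E) :=
    hf.aestronglyMeasurable.mono_measure (Measure.restrict_mono (hEB.trans hBU) le_rfl)
  have hxp : ∀ x : ℝ≥0∞, x ≤ 1 + x ^ p := by
    intro w
    rcases le_total w 1 with h | h
    · exact h.trans le_self_add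
    · calc w = w ^ (1:ℝ) := (ENNReal.rpow_one w).symm
      _ ≤ w ^ p := ENNReal.rpow_le_rpow_of_exponent_le h hp
      _ ≤ 1 + w ^ p := le_add_self
  have h5 : (∫⁻ z in E, ENNReal.ofReal (|f y₀ - f z| ^ p)) ≠ ⊤ := by
    have hle : (∫⁻ z in E, ENNReal.ofReal (|f y₀ - f z| ^ p))
        ≤ ENNReal.ofReal ((2 * r) ^ A) *
          ∫⁻ z in E, ENNReal.ofReal (|f y₀ - f z| ^ p / dist y₀ z ^ A) := by
      rw [← lintegral_const_mul' _ _ ENNReal.ofReal_ne_top]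
      refine lintegral_mono_ae ?_
      filter_upwards [ae_restrict_mem hE] with z hz
      exact key y₀ hy₀B z hz
    exact (hle.trans_lt (ENNReal.mul_lt_top ENNReal.ofReal_lt_top hy₀.lt_top)).ne
  have hfE : IntegrableOn f E := by
    refine ⟨haesm, ?_⟩
    rw [hasFiniteIntegral_iff_norm]
    have hptw : ∀ z, ENNReal.ofReal ‖f z‖
        ≤ (ENNReal.ofReal |f y₀| + 1) + ENNReal.ofReal (|f y₀ - f z| ^ p) := by
      intro z
      have h1 : ‖f z‖ ≤ |f y₀| + |f y₀ - f z| := by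
        rw [Real.norm_eq_abs]
        calc |f z| = |f y₀ - (f y₀ - f z)| := by ring_nf
        _ ≤ |f y₀| + |f y₀ - f z| := abs_sub _ _
      calc ENNReal.ofReal ‖f z‖ ≤ ENNReal.ofReal (|f y₀| + |f y₀ - f z|) :=
            ENNReal.ofReal_le_ofReal h1
      _ ≤ ENNReal.ofReal |f y₀| + ENNReal.ofReal |f y₀ - f z| := ENNReal.ofReal_add_le
      _ ≤ ENNReal.ofReal |f y₀| + (1 + ENNReal.ofReal |f y₀ - f z| ^ p) :=
            add_le_add_right (hxp _) _
      _ = (ENNReal.ofReal |f y₀| + 1) + ENNReal.ofReal (|f y₀ - f z| ^ p) := by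
            rw [ENNReal.ofReal_rpow_of_nonneg (abs_nonneg _) hp0.le]; ring
    calc (∫⁻ z in E, ENNReal.ofReal ‖f z‖)
        ≤ ∫⁻ z in E, ((ENNReal.ofReal |f y₀| + 1) + ENNReal.ofReal (|f y₀ - f z| ^ p)) :=
          lintegral_mono hptw
    _ = (ENNReal.ofReal |f y₀| + 1) * volume E
          + ∫⁻ z in E, ENNReal.ofReal (|f y₀ - f z| ^ p) := by
        rw [lintegral_add_left measurable_const, setLIntegral_const]
    _ < ⊤ := ENNReal.add_lt_top.mpr
        ⟨ENNReal.mul_lt_top (by simp [ENNReal.add_lt_top]) hEt.lt_top, h5.lt_top⟩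
  -- rewrite the average
  have hMpos : 0 < (volume E).toReal := ENNReal.toReal_pos hE0.ne' hEt
  have hconst : IntegrableOn (fun _ => f y₀) E (volume) := by
    exact integrableOn_const hEt
  have hrw : ∀ y, f y - (∫ z in E, f z) / (volume E).toReal
      = (∫ z in E, (f y - f z)) / (volume E).toReal := by
    intro y
    rw [integral_sub (integrableOn_const (C := f y) hEt) hfE, setIntegral_const,
      smul_eq_mul, measureReal_def]
    field_simp
  have step1 : ∀ y, ENNReal.ofReal (|f y - (∫ z in E, f z) / (volume E).toReal| ^ p)
      ≤ (volume E)⁻¹ * ∫⁻ z in E, ENNReal.ofReal (|f y - f z| ^ p) := by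
    intro y
    have hg : Integrable (fun z => f y - f z) (volume.restrict E) :=
      (integrableOn_const hEt).sub hfE
    have hb := avg_bound hp (μ := volume.restrict E)
      (by rw [Measure.restrict_apply_univ]; exact hE0.ne') (by rw [Measure.restrict_apply_univ]; exact hEt) hg
    rw [Measure.restrict_apply_univ] at hb
    rw [hrw y]
    exact hb
  calc (∫⁻ y in Metric.ball x r,
          ENNReal.ofReal (|f y - (∫ z in E, f z) / (volume E).toReal| ^ p))
      ≤ ∫⁻ y in Metric.ball x r,
          (volume E)⁻¹ * ∫⁻ z in E, ENNReal.ofReal (|f y - f z| ^ p) :=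
        lintegral_mono fun y => step1 y
  _ = (volume E)⁻¹ * ∫⁻ y in Metric.ball x r,
          ∫⁻ z in E, ENNReal.ofReal (|f y - f z| ^ p) :=
      lintegral_const_mul' _ _ (ENNReal.inv_ne_top.mpr hE0.ne')
  _ ≤ (volume E)⁻¹ * ∫⁻ y in Metric.ball x r,
        (ENNReal.ofReal ((2 * r) ^ A) *
          ∫⁻ z in E, ENNReal.ofReal (|f y - f z| ^ p / dist y z ^ A)) := by
      refine mul_le_mul_right ?_ _
      refine lintegral_mono_ae ?_
      filter_upwards [ae_restrict_mem measurableSet_ball] with y hy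
      rw [← lintegral_const_mul' _ _ ENNReal.ofReal_ne_top]
      refine lintegral_mono_ae ?_
      filter_upwards [ae_restrict_mem hE] with z hz
      exact key y hy z hz
  _ = (volume E)⁻¹ * (ENNReal.ofReal ((2 * r) ^ A) * I) := by
      rw [lintegral_const_mul' _ _ ENNReal.ofReal_ne_top]
  _ = ENNReal.ofReal (2 ^ A) * (ENNReal.ofReal (r ^ A) / volume E) * I := by
      rw [Real.mul_rpow (by norm_num) hr.le,
        ENNReal.ofReal_mul (Real.rpow_nonneg (by norm_num) A), div_eq_mul_inv]
      ring
end

section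
/- Let U ⊆ ℝ^N be open and connected, 1 ≤ p < ∞, 0 < s < 1, and let σ : U → (0,∞] be a screening function. Suppose there exist points x_1, …, x_m ∈ U and radii r_1, …, r_m > 0 such that for each n: 0 < r_n < σ(x_n), B(x_n, 2r_n) ⊆ U, 2r_n < σ(y) for all y ∈ B(x_n, r_n), and U = ⋃_{n=1}^m B(x_n, r_n). Then for every Lebesgue measurable set E ⊆ U with 𝓛^N(E) > 0 there exists a constant c = c(U, E, p, s) > 0 such that ‖f − f_E‖_{L^p(U)} ≤ c |f|_{W̃^{s,p}_{(σ)}(U)} for all f ∈ L¹_loc(U), where f_E = (1/𝓛^N(E)) ∫_E f(x) dx. -/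
open MeasureTheory Metric
open scoped ENNReal

private lemma aux_two_rpow {p : ℝ} (hp : 0 ≤ p) (a b : ℝ≥0∞) :
    (a + b) ^ p ≤ 2 ^ p * (a ^ p + b ^ p) := by
  have h1 : a + b ≤ 2 * (a ⊔ b) := by
    rw [two_mul]
    exact add_le_add le_sup_left le_sup_right
  calc (a + b) ^ p ≤ (2 * (a ⊔ b)) ^ p := ENNReal.rpow_le_rpow h1 hp
    _ = 2 ^ p * (a ⊔ b) ^ p := ENNReal.mul_rpow_of_nonneg _ _ hp
    _ ≤ 2 ^ p * (a ^ p + b ^ p) := by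
        gcongr
        rcases le_total a b with h | h
        · rw [sup_eq_right.2 h]; exact le_add_self
        · rw [sup_eq_left.2 h]; exact le_self_add

private lemma ennnorm_eq_ofReal_abs' (r : ℝ) : (‖r‖₊ : ℝ≥0∞) = ENNReal.ofReal |r| :=
  Real.enorm_eq_ofReal_abs r

private lemma aux_holder {α : Type*} [MeasurableSpace α] (μ : Measure α) {p : ℝ} (hp : 1 ≤ p)
    {g : α → ℝ≥0∞} (hg : AEMeasurable g μ) :
    ∫⁻ a, g a ∂μ ≤ (∫⁻ a, g a ^ p ∂μ) ^ (1 / p) * (μ Set.univ) ^ (1 - 1 / p) := by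
  rcases eq_or_lt_of_le hp with h | h
  · subst h
    simp
  · have hpq : p.HolderConjugate (Real.conjExponent p) := Real.HolderConjugate.conjExponent h
    have := ENNReal.lintegral_mul_le_Lp_mul_Lq μ hpq hg (aemeasurable_const (b := (1 : ℝ≥0∞)))
    simp only [Pi.mul_apply, mul_one, ENNReal.one_rpow, lintegral_one] at this
    have hq : 1 / Real.conjExponent p = 1 - 1 / p := by
      have := hpq.inv_add_inv_eq_one
      rw [one_div, one_div]; linarith
    rwa [hq] at this

private lemma setLIntegral_mono_on' {α : Type*} [MeasurableSpace α] {μ : Measure α} {s : Set α}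
    (hs : MeasurableSet s) {f g : α → ℝ≥0∞} (h : ∀ a ∈ s, f a ≤ g a) :
    ∫⁻ a in s, f a ∂μ ≤ ∫⁻ a in s, g a ∂μ :=
  lintegral_mono_ae ((ae_restrict_iff' hs).2 (Filter.Eventually.of_forall h))

private lemma aux_avg {α : Type*} [MeasurableSpace α] {μ : Measure α} {A : Set α}
    (h0 : μ A ≠ 0) (hfin : μ A ≠ ∞)
    {f : α → ℝ} (hf : IntegrableOn f A μ) (c : ℝ) :
    (‖(∫ z in A, f z ∂μ) / (μ A).toReal - c‖₊ : ℝ≥0∞)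
      ≤ (μ A)⁻¹ * ∫⁻ z in A, (‖f z - c‖₊ : ℝ≥0∞) ∂μ := by
  have htR : 0 < (μ A).toReal := ENNReal.toReal_pos h0 hfin
  have hconst : IntegrableOn (fun _ => c) A μ :=
    integrableOn_const hfin
  have hint : ∫ z in A, (f z - c) ∂μ = (∫ z in A, f z ∂μ) - (μ A).toReal * c := by
    rw [integral_sub hf hconst, setIntegral_const, smul_eq_mul]; rfl
  have key : (∫ z in A, f z ∂μ) / (μ A).toReal - c
      = (∫ z in A, (f z - c) ∂μ) / (μ A).toReal := by
    rw [hint]; field_simp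
  rw [key, ennnorm_eq_ofReal_abs', abs_div, abs_of_pos htR,
    ENNReal.ofReal_div_of_pos htR, ENNReal.ofReal_toReal hfin]
  rw [ENNReal.div_eq_inv_mul]
  gcongr
  calc ENNReal.ofReal |∫ z in A, (f z - c) ∂μ|
      = (‖∫ z in A, (f z - c) ∂μ‖₊ : ℝ≥0∞) := (ennnorm_eq_ofReal_abs' _).symm
    _ ≤ ∫⁻ z in A, (‖f z - c‖₊ : ℝ≥0∞) ∂μ := enorm_integral_le_lintegral_enorm _

private lemma aux_pow_avg {p : ℝ} (hp : 0 < p) {v : ℝ≥0∞} (h0 : v ≠ 0) (hfin : v ≠ ∞)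
    (X : ℝ≥0∞) : (v⁻¹ * (X ^ (1/p) * v ^ (1 - 1/p))) ^ p = v⁻¹ * X := by
  rw [ENNReal.mul_rpow_of_nonneg _ _ hp.le, ENNReal.mul_rpow_of_nonneg _ _ hp.le,
    ← ENNReal.rpow_mul X, ← ENNReal.rpow_mul v, one_div_mul_cancel hp.ne', ENNReal.rpow_one,
    ENNReal.inv_rpow]
  have h1 : (1 - 1/p) * p = p + (-1) := by
    rw [sub_mul, one_mul, one_div, inv_mul_cancel₀ hp.ne']; ring
  rw [h1, ENNReal.rpow_add _ _ h0 hfin, ENNReal.rpow_neg_one]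
  have hvp0 : v ^ p ≠ 0 := by
    simp [ENNReal.rpow_eq_zero_iff, h0, hfin]
  have hvpt : v ^ p ≠ ∞ := ENNReal.rpow_ne_top_of_nonneg hp.le hfin
  calc (v^p)⁻¹ * (X * (v^p * v⁻¹)) = ((v^p)⁻¹ * (v^p)) * (v⁻¹ * X) := by ring
    _ = v⁻¹ * X := by rw [ENNReal.inv_mul_cancel hvp0 hvpt, one_mul]

private lemma ennnorm_sub_rev' (a b : ℝ) : (‖a - b‖₊ : ℝ≥0∞) = (‖b - a‖₊ : ℝ≥0∞) := by
  rw [← neg_sub b a, nnnorm_neg]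

private lemma aux_tri_rpow {p : ℝ} (hp : 0 < p) (a b c : ℝ) :
    (‖a - c‖₊ : ℝ≥0∞) ^ p ≤ 2 ^ p * ((‖a - b‖₊ : ℝ≥0∞) ^ p + (‖b - c‖₊ : ℝ≥0∞) ^ p) := by
  have h1 : (‖a - c‖₊ : ℝ≥0∞) ≤ (‖a - b‖₊ : ℝ≥0∞) + (‖b - c‖₊ : ℝ≥0∞) := by
    rw [ennnorm_eq_ofReal_abs', ennnorm_eq_ofReal_abs', ennnorm_eq_ofReal_abs',
      ← ENNReal.ofReal_add (abs_nonneg _) (abs_nonneg _)]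
    exact ENNReal.ofReal_le_ofReal (abs_sub_le a b c)
  exact (ENNReal.rpow_le_rpow h1 hp.le).trans (aux_two_rpow hp.le _ _)

/-- The screened homogeneous fractional Sobolev seminorm
`|f|_{W̃^{s,p}_{(σ)}(U)} = (∫_U ∫_{B(x,σ(x)) ∩ U} |f(y)-f(x)|^p / |y-x|^{sp+N} dy dx)^{1/p}`
of a function `f : ℝ^N → ℝ`, valued in `ℝ≥0∞`. -/
noncomputable def screenedSeminorm (N : ℕ) (s p : ℝ)
    (U : Set (EuclideanSpace ℝ (Fin N))) (σ : EuclideanSpace ℝ (Fin N) → ℝ≥0∞)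
    (f : EuclideanSpace ℝ (Fin N) → ℝ) : ℝ≥0∞ :=
  (∫⁻ x in U, ∫⁻ y in U ∩ {y | edist y x < σ x},
      ENNReal.ofReal (|f y - f x| ^ p / dist y x ^ (s * p + N))) ^ (1 / p)

/-- Poincaré inequality on a connected union of finitely many small
balls.  Let `U ⊆ ℝ^N` be open and connected, `1 ≤ p < ∞`, `0 < s < 1`, `σ` a screening
function on `U`.  Suppose `U = ⋃_{n=1}^m B(x_n, r_n)` where each `r_n` satisfies the
conclusion of Lemma `screening radius`: `0 < r_n < σ(x_n)`, `B(x_n, 2 r_n) ⊆ U` and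
`2 r_n < σ(y)` for `y ∈ B(x_n, r_n)`.  Then for every measurable `E ⊆ U` with
`𝓛^N(E) > 0` there exists `c = c(U,E,p,s) > 0` with
`‖f - f_E‖_{L^p(U)} ≤ c |f|_{W̃^{s,p}_{(σ)}(U)}` for all `f ∈ L¹_loc(U)`. -/
theorem statement7 (N : ℕ) (U : Set (EuclideanSpace ℝ (Fin N)))
    (hUo : IsOpen U) (hUc : IsConnected U)
    (p s : ℝ) (hp : 1 ≤ p) (hs0 : 0 < s) (hs1 : s < 1)
    (σ : EuclideanSpace ℝ (Fin N) → ℝ≥0∞)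
    (hσlsc : LowerSemicontinuousOn σ U) (hσpos : ∀ x ∈ U, 0 < σ x)
    (m : ℕ) (x : Fin m → EuclideanSpace ℝ (Fin N)) (r : Fin m → ℝ)
    (hr : ∀ n, 0 < r n) (hrσ : ∀ n, ENNReal.ofReal (r n) < σ (x n))
    (hball : ∀ n, Metric.ball (x n) (2 * r n) ⊆ U)
    (hsmall : ∀ n, ∀ y ∈ Metric.ball (x n) (r n), ENNReal.ofReal (2 * r n) < σ y)
    (hcover : U = ⋃ n, Metric.ball (x n) (r n))
    (E : Set (EuclideanSpace ℝ (Fin N))) (hEU : E ⊆ U) (hEm : MeasurableSet E)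
    (hEpos : 0 < volume E) :
    ∃ c : ℝ, 0 < c ∧
      ∀ f : EuclideanSpace ℝ (Fin N) → ℝ, LocallyIntegrableOn f U →
        (∫⁻ y in U,
            ENNReal.ofReal (|f y - (∫ z in E, f z) / (volume E).toReal| ^ p)) ^ (1 / p)
          ≤ ENNReal.ofReal c * screenedSeminorm N s p U σ f := by
  classical
  have hp0 : (0:ℝ) < p := lt_of_lt_of_le one_pos hp
  have hp0' : p ≠ 0 := hp0.ne'
  have he0 : (0:ℝ) ≤ s * p + N := by positivity
  set B : Fin m → Set (EuclideanSpace ℝ (Fin N)) := fun n => Metric.ball (x n) (r n) with hBdef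
  have hBU : ∀ n, B n ⊆ U := fun n =>
    (Metric.ball_subset_ball (by linarith [hr n])).trans (hball n)
  have hBm : ∀ n, MeasurableSet (B n) := fun n => measurableSet_ball
  have hB0 : ∀ n, volume (B n) ≠ 0 := fun n => (measure_ball_pos volume _ (hr n)).ne'
  have hBfin : ∀ n, volume (B n) ≠ ∞ := fun n => measure_ball_lt_top.ne
  have hUmeas : MeasurableSet U := hUo.measurableSet
  have hUcomp : IsCompact U := by
    have h1 : U = ⋃ n, Metric.closedBall (x n) (r n) := by
      apply Set.Subset.antisymm
      · rw [hcover]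
        exact Set.iUnion_mono fun n => Metric.ball_subset_closedBall
      · refine Set.iUnion_subset fun n => ?_
        refine subset_trans ?_ (hball n)
        exact Metric.closedBall_subset_ball (by linarith [hr n])
    rw [h1]
    exact isCompact_iUnion fun n => isCompact_closedBall _ _
  have hUfin : volume U ≠ ∞ := hUcomp.measure_lt_top.ne
  have hEfin : volume E ≠ ∞ := fun h => hUfin (top_le_iff.1 (h ▸ measure_mono hEU))
  -- distance bound inside a ball
  have hdd : ∀ n, ∀ y ∈ B n, ∀ z ∈ B n, dist y z < 2 * r n := by
    intro n y hy z hz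
    have h1 : dist y (x n) < r n := mem_ball.1 hy
    have h2 : dist z (x n) < r n := mem_ball.1 hz
    calc dist y z ≤ dist y (x n) + dist (x n) z := dist_triangle _ _ _
      _ < r n + r n := by rw [dist_comm (x n) z]; linarith
      _ = 2 * r n := by ring
  -- the double integral in the seminorm
  set SS : (EuclideanSpace ℝ (Fin N) → ℝ) → ℝ≥0∞ := fun f =>
    ∫⁻ z in U, ∫⁻ y in U ∩ {y | edist y z < σ z},
      ENNReal.ofReal (|f y - f z| ^ p / dist y z ^ (s * p + N)) with hSSdef
  -- averages over balls
  set Av : Fin m → (EuclideanSpace ℝ (Fin N) → ℝ) → ℝ :=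
    fun n f => (∫ z in B n, f z) / (volume (B n)).toReal with hAvdef
  -- pointwise kernel bound on a ball
  have hker : ∀ n (f : EuclideanSpace ℝ (Fin N) → ℝ), ∀ y ∈ B n, ∀ z ∈ B n,
      (‖f y - f z‖₊ : ℝ≥0∞) ^ p ≤ ENNReal.ofReal ((2 * r n) ^ (s * p + N)) *
        ENNReal.ofReal (|f y - f z| ^ p / dist y z ^ (s * p + N)) := by
    intro n f y hy z hz
    have hd : dist y z < 2 * r n := hdd n y hy z hz
    have hrn : 0 < r n := hr n
    rw [ennnorm_eq_ofReal_abs',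
      ENNReal.ofReal_rpow_of_nonneg (abs_nonneg _) hp0.le,
      ← ENNReal.ofReal_mul (by positivity)]
    apply ENNReal.ofReal_le_ofReal
    rcases eq_or_lt_of_le (dist_nonneg (x := y) (y := z)) with h0 | h0
    · have : y = z := dist_eq_zero.1 h0.symm
      simp [this, Real.zero_rpow hp0.ne']
    · have hde : (0:ℝ) < dist y z ^ (s * p + N) := Real.rpow_pos_of_pos h0 _
      have key : |f y - f z| ^ p
          = dist y z ^ (s * p + N) * (|f y - f z| ^ p / dist y z ^ (s * p + N)) := by
        field_simp
      conv_lhs => rw [key]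
      apply mul_le_mul_of_nonneg_right _ (by positivity)
      exact Real.rpow_le_rpow dist_nonneg hd.le he0
  -- the doubled integral over a ball is dominated by SS
  have hDle : ∀ n (f : EuclideanSpace ℝ (Fin N) → ℝ),
      (∫⁻ z in B n, ∫⁻ y in B n,
        ENNReal.ofReal (|f y - f z| ^ p / dist y z ^ (s * p + N))) ≤ SS f := by
    intro n f
    refine le_trans (setLIntegral_mono_on' (hBm n) ?_) (lintegral_mono_set (hBU n))
    intro z hz
    apply lintegral_mono_set
    intro y hy
    refine ⟨hBU n hy, ?_⟩
    have hd : dist y z < 2 * r n := hdd n y hy z hz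
    have h2 : ENNReal.ofReal (dist y z) < ENNReal.ofReal (2 * r n) :=
      (ENNReal.ofReal_lt_ofReal_iff (by linarith [hr n])).2 hd
    show edist y z < σ z
    rw [edist_dist]
    exact lt_trans h2 (hsmall n z hz)
  -- Poincaré on each ball
  have hPoin : ∀ n (f : EuclideanSpace ℝ (Fin N) → ℝ), IntegrableOn f U volume →
      ∫⁻ y in B n, (‖f y - Av n f‖₊ : ℝ≥0∞) ^ p ≤
        ((volume (B n))⁻¹ * ENNReal.ofReal ((2 * r n) ^ (s * p + N))) * SS f := by
    intro n f hfU
    have hfBn : IntegrableOn f (B n) volume := hfU.mono_set (hBU n)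
    have hmeasf : AEStronglyMeasurable f (volume.restrict (B n)) := hfBn.1
    have hpt : ∀ y ∈ B n, (‖f y - Av n f‖₊ : ℝ≥0∞) ^ p ≤
        (volume (B n))⁻¹ * ∫⁻ z in B n, (‖f y - f z‖₊ : ℝ≥0∞) ^ p := by
      intro y hy
      have h2 : (‖Av n f - f y‖₊ : ℝ≥0∞)
          ≤ (volume (B n))⁻¹ * ∫⁻ z in B n, (‖f z - f y‖₊ : ℝ≥0∞) :=
        aux_avg (hB0 n) (hBfin n) hfBn (f y)
      have hg : AEMeasurable (fun z => (‖f z - f y‖₊ : ℝ≥0∞)) (volume.restrict (B n)) :=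
        (hmeasf.sub aestronglyMeasurable_const).enorm
      have h3 := aux_holder (volume.restrict (B n)) hp hg
      rw [Measure.restrict_apply_univ] at h3
      have hchain : (‖f y - Av n f‖₊ : ℝ≥0∞) ≤ (volume (B n))⁻¹ *
          ((∫⁻ z in B n, (‖f z - f y‖₊ : ℝ≥0∞) ^ p) ^ (1/p)
            * (volume (B n)) ^ (1 - 1/p)) := by
        rw [ennnorm_sub_rev' (f y) (Av n f)]
        exact h2.trans (by gcongr)
      calc (‖f y - Av n f‖₊ : ℝ≥0∞) ^ p
          ≤ ((volume (B n))⁻¹ * ((∫⁻ z in B n, (‖f z - f y‖₊ : ℝ≥0∞) ^ p) ^ (1/p)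
              * (volume (B n)) ^ (1 - 1/p))) ^ p := ENNReal.rpow_le_rpow hchain hp0.le
        _ = (volume (B n))⁻¹ * ∫⁻ z in B n, (‖f z - f y‖₊ : ℝ≥0∞) ^ p :=
            aux_pow_avg hp0 (hB0 n) (hBfin n) _
        _ = (volume (B n))⁻¹ * ∫⁻ z in B n, (‖f y - f z‖₊ : ℝ≥0∞) ^ p := by
            congr 1
            exact lintegral_congr fun z => by rw [ennnorm_sub_rev' (f z) (f y)]
    have hin : ∀ y ∈ B n, (∫⁻ z in B n, (‖f y - f z‖₊ : ℝ≥0∞) ^ p) ≤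
        ENNReal.ofReal ((2 * r n) ^ (s * p + N)) *
          ∫⁻ z in B n, ENNReal.ofReal (|f y - f z| ^ p / dist y z ^ (s * p + N)) := by
      intro y hy
      calc (∫⁻ z in B n, (‖f y - f z‖₊ : ℝ≥0∞) ^ p)
          ≤ ∫⁻ z in B n, ENNReal.ofReal ((2 * r n) ^ (s * p + N)) *
              ENNReal.ofReal (|f y - f z| ^ p / dist y z ^ (s * p + N)) :=
            setLIntegral_mono_on' (hBm n) (fun z hz => hker n f y hy z hz)
        _ = _ := lintegral_const_mul' _ _ ENNReal.ofReal_ne_top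
    calc ∫⁻ y in B n, (‖f y - Av n f‖₊ : ℝ≥0∞) ^ p
        ≤ ∫⁻ y in B n, (volume (B n))⁻¹ * ∫⁻ z in B n, (‖f y - f z‖₊ : ℝ≥0∞) ^ p :=
          setLIntegral_mono_on' (hBm n) hpt
      _ = (volume (B n))⁻¹ * ∫⁻ y in B n, ∫⁻ z in B n, (‖f y - f z‖₊ : ℝ≥0∞) ^ p :=
          lintegral_const_mul' _ _ (ENNReal.inv_ne_top.2 (hB0 n))
      _ ≤ (volume (B n))⁻¹ * ∫⁻ y in B n, ENNReal.ofReal ((2 * r n) ^ (s * p + N)) *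
            ∫⁻ z in B n, ENNReal.ofReal (|f y - f z| ^ p / dist y z ^ (s * p + N)) := by
          exact mul_le_mul_right (setLIntegral_mono_on' (hBm n) hin) _
      _ = (volume (B n))⁻¹ * (ENNReal.ofReal ((2 * r n) ^ (s * p + N)) *
            ∫⁻ y in B n, ∫⁻ z in B n,
              ENNReal.ofReal (|f y - f z| ^ p / dist y z ^ (s * p + N))) := by
          rw [lintegral_const_mul' _ _ ENNReal.ofReal_ne_top]
      _ = ((volume (B n))⁻¹ * ENNReal.ofReal ((2 * r n) ^ (s * p + N))) *
            ∫⁻ y in B n, ∫⁻ z in B n,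
              ENNReal.ofReal (|f y - f z| ^ p / dist y z ^ (s * p + N)) := by ring
      _ = ((volume (B n))⁻¹ * ENNReal.ofReal ((2 * r n) ^ (s * p + N))) *
            ∫⁻ a in B n, ∫⁻ b in B n,
              ENNReal.ofReal (|f b - f a| ^ p / dist b a ^ (s * p + N)) := by
          congr 1
          exact lintegral_congr fun a => lintegral_congr fun b => by
            rw [abs_sub_comm, dist_comm]
      _ ≤ _ := mul_le_mul_right (hDle n f) _
  -- comparison of averages of overlapping balls
  have hedge : ∀ n k, (B n ∩ B k).Nonempty → ∃ C : ℝ≥0∞, C ≠ ∞ ∧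
      ∀ f : EuclideanSpace ℝ (Fin N) → ℝ, IntegrableOn f U volume →
        (‖Av n f - Av k f‖₊ : ℝ≥0∞) ^ p ≤ C * SS f := by
    intro n k hnk
    have hW : volume (B n ∩ B k) ≠ 0 :=
      ((isOpen_ball.inter isOpen_ball).measure_pos volume hnk).ne'
    have hWfin : volume (B n ∩ B k) ≠ ∞ :=
      fun h => hBfin n (top_le_iff.1 (h ▸ measure_mono Set.inter_subset_left))
    set Cn : ℝ≥0∞ := (volume (B n))⁻¹ * ENNReal.ofReal ((2 * r n) ^ (s * p + N)) with hCn
    set Ck : ℝ≥0∞ := (volume (B k))⁻¹ * ENNReal.ofReal ((2 * r k) ^ (s * p + N)) with hCk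
    have hCnfin : Cn ≠ ∞ :=
      ENNReal.mul_ne_top (ENNReal.inv_ne_top.2 (hB0 n)) ENNReal.ofReal_ne_top
    have hCkfin : Ck ≠ ∞ :=
      ENNReal.mul_ne_top (ENNReal.inv_ne_top.2 (hB0 k)) ENNReal.ofReal_ne_top
    refine ⟨(volume (B n ∩ B k))⁻¹ * (2 ^ p * (Cn + Ck)), ?_, ?_⟩
    · exact ENNReal.mul_ne_top (ENNReal.inv_ne_top.2 hW)
        (ENNReal.mul_ne_top (ENNReal.rpow_ne_top_of_nonneg hp0.le (by norm_num))
          (ENNReal.add_ne_top.2 ⟨hCnfin, hCkfin⟩))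
    intro f hfU
    have hpt : ∀ y ∈ B n ∩ B k, (‖Av n f - Av k f‖₊ : ℝ≥0∞) ^ p ≤
        2 ^ p * ((‖f y - Av n f‖₊ : ℝ≥0∞) ^ p + (‖f y - Av k f‖₊ : ℝ≥0∞) ^ p) := by
      intro y _
      have := aux_tri_rpow hp0 (Av n f) (f y) (Av k f)
      rwa [ennnorm_sub_rev' (Av n f) (f y)] at this
    have hkey : (‖Av n f - Av k f‖₊ : ℝ≥0∞) ^ p * volume (B n ∩ B k) ≤
        2 ^ p * ((Cn + Ck) * SS f) := by
      calc (‖Av n f - Av k f‖₊ : ℝ≥0∞) ^ p * volume (B n ∩ B k)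
          = ∫⁻ _ in B n ∩ B k, (‖Av n f - Av k f‖₊ : ℝ≥0∞) ^ p :=
            (setLIntegral_const _ _).symm
        _ ≤ ∫⁻ y in B n ∩ B k,
              2 ^ p * ((‖f y - Av n f‖₊ : ℝ≥0∞) ^ p + (‖f y - Av k f‖₊ : ℝ≥0∞) ^ p) :=
            setLIntegral_mono_on' ((hBm n).inter (hBm k)) hpt
        _ = 2 ^ p * ∫⁻ y in B n ∩ B k,
              ((‖f y - Av n f‖₊ : ℝ≥0∞) ^ p + (‖f y - Av k f‖₊ : ℝ≥0∞) ^ p) :=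
            lintegral_const_mul' _ _ (ENNReal.rpow_ne_top_of_nonneg hp0.le (by norm_num))
        _ = 2 ^ p * ((∫⁻ y in B n ∩ B k, (‖f y - Av n f‖₊ : ℝ≥0∞) ^ p) +
              ∫⁻ y in B n ∩ B k, (‖f y - Av k f‖₊ : ℝ≥0∞) ^ p) := by
            congr 1
            exact lintegral_add_right' _
              ((((hfU.mono_set (Set.inter_subset_left.trans (hBU n))).1.sub
                aestronglyMeasurable_const).enorm).pow_const p)
        _ ≤ 2 ^ p * ((∫⁻ y in B n, (‖f y - Av n f‖₊ : ℝ≥0∞) ^ p) +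
              ∫⁻ y in B k, (‖f y - Av k f‖₊ : ℝ≥0∞) ^ p) := by
            gcongr
            · exact Set.inter_subset_left
            · exact Set.inter_subset_right
        _ ≤ 2 ^ p * (Cn * SS f + Ck * SS f) := by
            gcongr
            · exact hPoin n f hfU
            · exact hPoin k f hfU
        _ = 2 ^ p * ((Cn + Ck) * SS f) := by ring
    have := (ENNReal.le_div_iff_mul_le (Or.inl hW) (Or.inl hWfin)).2 hkey
    refine this.trans (le_of_eq ?_)
    rw [ENNReal.div_eq_inv_mul]
    ring
  -- base index
  obtain ⟨e, heE⟩ : E.Nonempty := nonempty_of_measure_ne_zero hEpos.ne'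
  have heU : e ∈ U := hEU heE
  obtain ⟨n₀, hn₀⟩ : ∃ n, e ∈ B n := by
    rw [hcover] at heU; exact Set.mem_iUnion.1 heU
  -- connectivity of the cover
  have hreach : ∀ n, Relation.ReflTransGen (fun a b => (B a ∩ B b).Nonempty) n₀ n := by
    set rel : Fin m → Fin m → Prop := fun a b => (B a ∩ B b).Nonempty with hrel
    set P : Fin m → Prop := fun n => Relation.ReflTransGen rel n₀ n with hP
    set V : Set (EuclideanSpace ℝ (Fin N)) := ⋃ (k : Fin m) (_ : P k), B k with hV
    set W : Set (EuclideanSpace ℝ (Fin N)) := ⋃ (k : Fin m) (_ : ¬ P k), B k with hW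
    have hVo : IsOpen V := isOpen_iUnion fun k => isOpen_iUnion fun _ => isOpen_ball
    have hWo : IsOpen W := isOpen_iUnion fun k => isOpen_iUnion fun _ => isOpen_ball
    have hdisj : Disjoint V W := by
      rw [Set.disjoint_left]
      rintro y hyV hyW
      obtain ⟨a, hPa, hya⟩ := Set.mem_iUnion₂.1 hyV
      obtain ⟨b, hPb, hyb⟩ := Set.mem_iUnion₂.1 hyW
      exact hPb (hPa.tail ⟨y, hya, hyb⟩)
    have hsub : U ⊆ V ∪ W := by
      intro y hy
      rw [hcover] at hy
      obtain ⟨k, hk⟩ := Set.mem_iUnion.1 hy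
      by_cases h : P k
      · exact Or.inl (Set.mem_iUnion₂.2 ⟨k, h, hk⟩)
      · exact Or.inr (Set.mem_iUnion₂.2 ⟨k, h, hk⟩)
    have hUV : U ⊆ V := by
      rcases hUc.isPreconnected.subset_or_subset hVo hWo hdisj hsub with h | h
      · exact h
      · exfalso
        obtain ⟨b, hPb, hyb⟩ := Set.mem_iUnion₂.1 (h heU)
        exact hPb (Relation.ReflTransGen.refl.tail ⟨e, hn₀, hyb⟩)
    intro n
    have hy : x n ∈ B n := mem_ball_self (hr n)
    obtain ⟨a, hPa, hya⟩ := Set.mem_iUnion₂.1 (hUV (hBU n hy))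
    exact hPa.tail ⟨x n, hya, hy⟩
  -- chain comparison to the base ball
  have hchain : ∀ n, ∃ C : ℝ≥0∞, C ≠ ∞ ∧
      ∀ f : EuclideanSpace ℝ (Fin N) → ℝ, IntegrableOn f U volume →
        (‖Av n f - Av n₀ f‖₊ : ℝ≥0∞) ^ p ≤ C * SS f := by
    have key : ∀ {b : Fin m}, Relation.ReflTransGen (fun a b => (B a ∩ B b).Nonempty) n₀ b →
        ∃ C : ℝ≥0∞, C ≠ ∞ ∧
          ∀ f : EuclideanSpace ℝ (Fin N) → ℝ, IntegrableOn f U volume →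
            (‖Av b f - Av n₀ f‖₊ : ℝ≥0∞) ^ p ≤ C * SS f := by
      intro b h
      induction h with
      | refl =>
          refine ⟨0, by simp, fun f _ => ?_⟩
          simp [sub_self, ENNReal.zero_rpow_of_pos hp0]
      | @tail b c _ hbc ih =>
          obtain ⟨C1, hC1f, hC1⟩ := ih
          obtain ⟨C2, hC2f, hC2⟩ := hedge b c hbc
          refine ⟨2 ^ p * (C2 + C1),
            ENNReal.mul_ne_top (ENNReal.rpow_ne_top_of_nonneg hp0.le (by norm_num))
              (ENNReal.add_ne_top.2 ⟨hC2f, hC1f⟩), fun f hf => ?_⟩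
          calc (‖Av c f - Av n₀ f‖₊ : ℝ≥0∞) ^ p
              ≤ 2 ^ p * ((‖Av c f - Av b f‖₊ : ℝ≥0∞) ^ p +
                  (‖Av b f - Av n₀ f‖₊ : ℝ≥0∞) ^ p) := aux_tri_rpow hp0 _ _ _
            _ ≤ 2 ^ p * (C2 * SS f + C1 * SS f) := by
                gcongr
                · rw [ennnorm_sub_rev' (Av c f) (Av b f)]
                  exact hC2 f hf
                · exact hC1 f hf
            _ = (2 ^ p * (C2 + C1)) * SS f := by ring
    exact fun n => key (hreach n)
  choose Cc hCcfin hCc using hchain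
  -- integral over each ball against the base average
  have hKball0 : ∀ n, ∃ C : ℝ≥0∞, C ≠ ∞ ∧
      ∀ f : EuclideanSpace ℝ (Fin N) → ℝ, IntegrableOn f U volume →
        ∫⁻ y in B n, (‖f y - Av n₀ f‖₊ : ℝ≥0∞) ^ p ≤ C * SS f := by
    intro n
    set Cn : ℝ≥0∞ := (volume (B n))⁻¹ * ENNReal.ofReal ((2 * r n) ^ (s * p + N)) with hCn
    have hCnfin : Cn ≠ ∞ :=
      ENNReal.mul_ne_top (ENNReal.inv_ne_top.2 (hB0 n)) ENNReal.ofReal_ne_top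
    refine ⟨2 ^ p * (Cn + volume (B n) * Cc n),
      ENNReal.mul_ne_top (ENNReal.rpow_ne_top_of_nonneg hp0.le (by norm_num))
        (ENNReal.add_ne_top.2 ⟨hCnfin, ENNReal.mul_ne_top (hBfin n) (hCcfin n)⟩),
      fun f hf => ?_⟩
    calc ∫⁻ y in B n, (‖f y - Av n₀ f‖₊ : ℝ≥0∞) ^ p
        ≤ ∫⁻ y in B n, 2 ^ p * ((‖f y - Av n f‖₊ : ℝ≥0∞) ^ p +
            (‖Av n f - Av n₀ f‖₊ : ℝ≥0∞) ^ p) :=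
          setLIntegral_mono_on' (hBm n) (fun y _ => aux_tri_rpow hp0 _ _ _)
      _ = 2 ^ p * ∫⁻ y in B n, ((‖f y - Av n f‖₊ : ℝ≥0∞) ^ p +
            (‖Av n f - Av n₀ f‖₊ : ℝ≥0∞) ^ p) :=
          lintegral_const_mul' _ _ (ENNReal.rpow_ne_top_of_nonneg hp0.le (by norm_num))
      _ = 2 ^ p * ((∫⁻ y in B n, (‖f y - Av n f‖₊ : ℝ≥0∞) ^ p) +
            ∫⁻ _ in B n, (‖Av n f - Av n₀ f‖₊ : ℝ≥0∞) ^ p) := by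
          congr 1
          exact lintegral_add_right' _ aemeasurable_const
      _ ≤ 2 ^ p * (Cn * SS f + (‖Av n f - Av n₀ f‖₊ : ℝ≥0∞) ^ p * volume (B n)) := by
          rw [setLIntegral_const]
          gcongr
          exact hPoin n f hf
      _ ≤ 2 ^ p * (Cn * SS f + (Cc n * SS f) * volume (B n)) := by
          gcongr
          exact hCc n f hf
      _ = (2 ^ p * (Cn + volume (B n) * Cc n)) * SS f := by ring
  choose Cb hCbfin hCb using hKball0
  -- integral over U against the base average
  have hKU : ∀ f : EuclideanSpace ℝ (Fin N) → ℝ, IntegrableOn f U volume →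
      ∫⁻ y in U, (‖f y - Av n₀ f‖₊ : ℝ≥0∞) ^ p ≤ (∑ n, Cb n) * SS f := by
    intro f hf
    calc ∫⁻ y in U, (‖f y - Av n₀ f‖₊ : ℝ≥0∞) ^ p
        = ∫⁻ y in ⋃ n, B n, (‖f y - Av n₀ f‖₊ : ℝ≥0∞) ^ p := by rw [← hcover]
      _ ≤ ∑' n, ∫⁻ y in B n, (‖f y - Av n₀ f‖₊ : ℝ≥0∞) ^ p := lintegral_iUnion_le _ _
      _ = ∑ n, ∫⁻ y in B n, (‖f y - Av n₀ f‖₊ : ℝ≥0∞) ^ p := tsum_fintype _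
      _ ≤ ∑ n, Cb n * SS f := Finset.sum_le_sum fun n _ => hCb n f hf
      _ = (∑ n, Cb n) * SS f := (Finset.sum_mul _ _ _).symm
  set CU : ℝ≥0∞ := ∑ n, Cb n with hCUdef
  have hCUfin : CU ≠ ∞ := by
    refine (ENNReal.sum_lt_top.2 fun n _ => ?_).ne
    exact (hCbfin n).lt_top
  -- distance from the E-average to the base average
  set CE : ℝ≥0∞ := (volume E)⁻¹ ^ p * (CU * (volume U) ^ (p - 1)) with hCEdef
  have hCEfin : CE ≠ ∞ := by
    refine ENNReal.mul_ne_top ?_ (ENNReal.mul_ne_top hCUfin ?_)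
    · exact ENNReal.rpow_ne_top_of_nonneg hp0.le (ENNReal.inv_ne_top.2 hEpos.ne')
    · exact ENNReal.rpow_ne_top_of_nonneg (by linarith) hUfin
  have hKE : ∀ f : EuclideanSpace ℝ (Fin N) → ℝ, IntegrableOn f U volume →
      (‖(∫ z in E, f z) / (volume E).toReal - Av n₀ f‖₊ : ℝ≥0∞) ^ p ≤ CE * SS f := by
    intro f hf
    have h1 : (‖(∫ z in E, f z) / (volume E).toReal - Av n₀ f‖₊ : ℝ≥0∞)
        ≤ (volume E)⁻¹ * ∫⁻ z in E, (‖f z - Av n₀ f‖₊ : ℝ≥0∞) :=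
      aux_avg hEpos.ne' hEfin (hf.mono_set hEU) _
    have hg : AEMeasurable (fun z => (‖f z - Av n₀ f‖₊ : ℝ≥0∞)) (volume.restrict U) :=
      (hf.1.sub aestronglyMeasurable_const).enorm
    have h3 := aux_holder (volume.restrict U) hp hg
    rw [Measure.restrict_apply_univ] at h3
    have h4 : (∫⁻ z in U, (‖f z - Av n₀ f‖₊ : ℝ≥0∞) ^ p) ≤ CU * SS f := hKU f hf
    have h5 : (‖(∫ z in E, f z) / (volume E).toReal - Av n₀ f‖₊ : ℝ≥0∞)
        ≤ (volume E)⁻¹ * ((CU * SS f) ^ (1/p) * (volume U) ^ (1 - 1/p)) := by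
      refine h1.trans ?_
      gcongr
      refine (lintegral_mono_set hEU).trans (h3.trans ?_)
      gcongr
    calc (‖(∫ z in E, f z) / (volume E).toReal - Av n₀ f‖₊ : ℝ≥0∞) ^ p
        ≤ ((volume E)⁻¹ * ((CU * SS f) ^ (1/p) * (volume U) ^ (1 - 1/p))) ^ p :=
          ENNReal.rpow_le_rpow h5 hp0.le
      _ = (volume E)⁻¹ ^ p * ((CU * SS f) ^ ((1/p) * p) * (volume U) ^ ((1 - 1/p) * p)) := by
          rw [ENNReal.mul_rpow_of_nonneg _ _ hp0.le, ENNReal.mul_rpow_of_nonneg _ _ hp0.le,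
            ← ENNReal.rpow_mul, ← ENNReal.rpow_mul]
      _ = (volume E)⁻¹ ^ p * ((CU * SS f) * (volume U) ^ (p - 1)) := by
          rw [one_div_mul_cancel hp0', ENNReal.rpow_one]
          congr 2
          rw [sub_mul, one_mul, one_div, inv_mul_cancel₀ hp0']
      _ = CE * SS f := by rw [hCEdef]; ring
  -- total constant
  set Ctot : ℝ≥0∞ := 2 ^ p * (CU + volume U * CE) with hCtot
  have hCtotfin : Ctot ≠ ∞ := by
    apply ENNReal.mul_ne_top
    · exact ENNReal.rpow_ne_top_of_nonneg hp0.le (by norm_num)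
    · exact ENNReal.add_ne_top.2 ⟨hCUfin, ENNReal.mul_ne_top hUfin hCEfin⟩
  have hCtopow : Ctot ^ (1/p) ≠ ∞ :=
    ENNReal.rpow_ne_top_of_nonneg (by positivity) hCtotfin
  refine ⟨(Ctot ^ (1/p)).toReal + 1, by positivity, ?_⟩
  intro f hfloc
  have hfU : IntegrableOn f U volume := hfloc.integrableOn_isCompact hUcomp
  set c₀ : ℝ := (∫ z in E, f z) / (volume E).toReal with hc₀
  have hmain : (∫⁻ y in U, ENNReal.ofReal (|f y - c₀| ^ p)) ≤ Ctot * SS f := by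
    calc (∫⁻ y in U, ENNReal.ofReal (|f y - c₀| ^ p))
        = ∫⁻ y in U, (‖f y - c₀‖₊ : ℝ≥0∞) ^ p := by
          refine lintegral_congr fun y => ?_
          rw [ennnorm_eq_ofReal_abs',
            ENNReal.ofReal_rpow_of_nonneg (abs_nonneg _) hp0.le]
      _ ≤ ∫⁻ y in U, 2 ^ p * ((‖f y - Av n₀ f‖₊ : ℝ≥0∞) ^ p +
            (‖Av n₀ f - c₀‖₊ : ℝ≥0∞) ^ p) :=
          setLIntegral_mono_on' hUmeas (fun y _ => aux_tri_rpow hp0 _ _ _)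
      _ = 2 ^ p * ∫⁻ y in U, ((‖f y - Av n₀ f‖₊ : ℝ≥0∞) ^ p +
            (‖Av n₀ f - c₀‖₊ : ℝ≥0∞) ^ p) :=
          lintegral_const_mul' _ _ (ENNReal.rpow_ne_top_of_nonneg hp0.le (by norm_num))
      _ = 2 ^ p * ((∫⁻ y in U, (‖f y - Av n₀ f‖₊ : ℝ≥0∞) ^ p) +
            ∫⁻ _ in U, (‖Av n₀ f - c₀‖₊ : ℝ≥0∞) ^ p) := by
          congr 1
          exact lintegral_add_right' _ aemeasurable_const
      _ ≤ 2 ^ p * (CU * SS f + (‖Av n₀ f - c₀‖₊ : ℝ≥0∞) ^ p * volume U) := by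
          rw [setLIntegral_const]
          gcongr
          exact hKU f hfU
      _ ≤ 2 ^ p * (CU * SS f + (CE * SS f) * volume U) := by
          gcongr
          rw [ennnorm_sub_rev' (Av n₀ f) c₀]
          exact hKE f hfU
      _ = Ctot * SS f := by rw [hCtot]; ring
  calc (∫⁻ y in U, ENNReal.ofReal (|f y - c₀| ^ p)) ^ (1/p)
      ≤ (Ctot * SS f) ^ (1/p) := ENNReal.rpow_le_rpow hmain (by positivity)
    _ = Ctot ^ (1/p) * (SS f) ^ (1/p) := ENNReal.mul_rpow_of_nonneg _ _ (by positivity)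
    _ ≤ ENNReal.ofReal ((Ctot ^ (1/p)).toReal + 1) * (SS f) ^ (1/p) := by
        gcongr
        calc Ctot ^ (1/p) = ENNReal.ofReal ((Ctot ^ (1/p)).toReal) :=
              (ENNReal.ofReal_toReal hCtopow).symm
          _ ≤ ENNReal.ofReal ((Ctot ^ (1/p)).toReal + 1) :=
              ENNReal.ofReal_le_ofReal (by linarith)
    _ = ENNReal.ofReal ((Ctot ^ (1/p)).toReal + 1) * screenedSeminorm N s p U σ f := rfl
end

section
/- Let U ⊆ ℝ^N be open, 1 ≤ p < ∞, 0 < s < 1, and let σ : U → (0,∞] be a screening function with σ_− := inf_U σ > 0. Then there exists a constant c = c(N, s, p, σ_−) > 0 such that for every f ∈ L¹_loc(U): ‖f‖_{L^p(U)} + |f|_{W̃^{s,p}_{(σ)}(U)} ≤ ‖f‖_{L^p(U)} + |f|_{Ẇ^{s,p}(U)} ≤ c (‖f‖_{L^p(U)} + |f|_{W̃^{s,p}_{(σ)}(U)}). -/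
open MeasureTheory Metric
open scoped ENNReal

/-- The `L^p(U)` norm of `f`, valued in `ℝ≥0∞`. -/
noncomputable def lpNormOn (N : ℕ) (p : ℝ) (U : Set (EuclideanSpace ℝ (Fin N)))
    (f : EuclideanSpace ℝ (Fin N) → ℝ) : ℝ≥0∞ :=
  (∫⁻ x in U, ENNReal.ofReal (|f x| ^ p)) ^ (1 / p)

open Set

namespace Statement10Aux

variable {N : ℕ}

/-- The translation-invariant kernel `z ↦ ‖z‖^{-α} 1_{‖z‖ ≥ σm}`. -/
noncomputable def ker (N : ℕ) (α σm : ℝ) (z : EuclideanSpace ℝ (Fin N)) : ℝ≥0∞ :=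
  ({z : EuclideanSpace ℝ (Fin N) | σm ≤ ‖z‖}).indicator
    (fun z => ENNReal.ofReal ((‖z‖ ^ α)⁻¹)) z

lemma ker_measurable (α σm : ℝ) : Measurable (ker N α σm) := by
  apply Measurable.indicator
  · fun_prop
  · exact measurableSet_le measurable_const measurable_norm

lemma ker_neg (α σm : ℝ) (z : EuclideanSpace ℝ (Fin N)) : ker N α σm (-z) = ker N α σm z := by
  simp [ker, Set.indicator, norm_neg]

/-- Finiteness of the kernel integral, for `α > N`. -/
lemma ker_integral_lt_top {α σm : ℝ} (hσm : 0 < σm) (hα : (N : ℝ) < α) :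
    (∫⁻ z : EuclideanSpace ℝ (Fin N), ker N α σm z) < ∞ := by
  have hα0 : 0 < α := lt_of_le_of_lt (Nat.cast_nonneg N) hα
  set c3 : ℝ := (1 + 1/σm) ^ α with hc3
  have hc3pos : 0 < c3 := Real.rpow_pos_of_pos (by positivity) _
  have hpt : ∀ z : EuclideanSpace ℝ (Fin N),
      ker N α σm z ≤ ENNReal.ofReal c3 * ENNReal.ofReal ((1 + ‖z‖) ^ (-α)) := by
    intro z
    rw [← ENNReal.ofReal_mul hc3pos.le]
    unfold ker
    by_cases hz : σm ≤ ‖z‖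
    · have hz' : z ∈ {z : EuclideanSpace ℝ (Fin N) | σm ≤ ‖z‖} := hz
      rw [Set.indicator_of_mem hz']
      apply ENNReal.ofReal_le_ofReal
      have hz0 : 0 < ‖z‖ := lt_of_lt_of_le hσm hz
      have h2 : (1 + ‖z‖) ≤ (1 + 1/σm) * ‖z‖ := by
        have h1 : 1 ≤ ‖z‖ / σm := (one_le_div hσm).2 hz
        have h' : (1 + 1/σm) * ‖z‖ = ‖z‖ + ‖z‖/σm := by ring
        rw [h']; linarith
      have h3 : (1 + ‖z‖) ^ α ≤ c3 * ‖z‖ ^ α := by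
        rw [hc3, ← Real.mul_rpow (by positivity) hz0.le]
        exact Real.rpow_le_rpow (by positivity) h2 hα0.le
      rw [Real.rpow_neg (by positivity)]
      calc (‖z‖ ^ α)⁻¹ = c3 * (c3 * ‖z‖ ^ α)⁻¹ := by
            rw [mul_inv]
            rw [← mul_assoc, mul_inv_cancel₀ hc3pos.ne', one_mul]
        _ ≤ c3 * ((1 + ‖z‖) ^ α)⁻¹ := by
            have h4 : (c3 * ‖z‖ ^ α)⁻¹ ≤ ((1 + ‖z‖) ^ α)⁻¹ := inv_anti₀ (by positivity) h3
            exact mul_le_mul_of_nonneg_left h4 hc3pos.le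
    · have hz' : z ∉ {z : EuclideanSpace ℝ (Fin N) | σm ≤ ‖z‖} := hz
      rw [Set.indicator_of_notMem hz']; exact zero_le
  calc (∫⁻ z : EuclideanSpace ℝ (Fin N), ker N α σm z)
      ≤ ∫⁻ z : EuclideanSpace ℝ (Fin N),
          ENNReal.ofReal c3 * ENNReal.ofReal ((1 + ‖z‖) ^ (-α)) := lintegral_mono hpt
    _ = ENNReal.ofReal c3 * ∫⁻ z : EuclideanSpace ℝ (Fin N),
          ENNReal.ofReal ((1 + ‖z‖) ^ (-α)) := by
        rw [lintegral_const_mul]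
        fun_prop
    _ < ∞ := by
        apply ENNReal.mul_lt_top ENNReal.ofReal_lt_top
        have h5 : (Module.finrank ℝ (EuclideanSpace ℝ (Fin N)) : ℝ) < α := by
          rw [finrank_euclideanSpace_fin]; exact hα
        exact finite_integral_one_add_norm h5


/-- Core estimate for measurable `f`. -/
lemma key {U : Set (EuclideanSpace ℝ (Fin N))} (hU : MeasurableSet U)
    {p s σm : ℝ} (hp : 1 ≤ p) (hσm : 0 < σm)
    {σ : EuclideanSpace ℝ (Fin N) → ℝ≥0∞}
    (hσlb : ∀ x ∈ U, ENNReal.ofReal σm ≤ σ x)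
    {f : EuclideanSpace ℝ (Fin N) → ℝ} (hf : Measurable f) :
    (∫⁻ x in U, ∫⁻ y in U, ENNReal.ofReal (|f y - f x| ^ p / dist y x ^ (s * p + N)))
      ≤ (∫⁻ x in U, ∫⁻ y in U ∩ {y | edist y x < σ x},
            ENNReal.ofReal (|f y - f x| ^ p / dist y x ^ (s * p + N)))
        + 2 * (2 : ℝ≥0∞) ^ (p - 1) * (∫⁻ z : EuclideanSpace ℝ (Fin N), ker N (s * p + N) σm z)
            * ∫⁻ x in U, ENNReal.ofReal (|f x| ^ p) := by
  have hp0 : (0 : ℝ) < p := lt_of_lt_of_le one_pos hp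
  set α : ℝ := s * p + N with hα
  set k : EuclideanSpace ℝ (Fin N) → ℝ≥0∞ := ker N α σm with hk
  have hkmeas : Measurable k := ker_measurable α σm
  set C₀ : ℝ≥0∞ := ∫⁻ z : EuclideanSpace ℝ (Fin N), k z with hC₀
  set A : EuclideanSpace ℝ (Fin N) → ℝ≥0∞ := fun w => ENNReal.ofReal (|f w| ^ p) with hA
  have hAmeas : Measurable A := by fun_prop
  set g : EuclideanSpace ℝ (Fin N) → EuclideanSpace ℝ (Fin N) → ℝ≥0∞ :=
    fun x y => ENNReal.ofReal (|f y - f x| ^ p / dist y x ^ α) with hg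
  set L : ℝ≥0∞ := ∫⁻ x in U, A x with hL
  -- pointwise bound off the diagonal strip
  have hpt : ∀ x y : EuclideanSpace ℝ (Fin N), σm ≤ dist y x →
      g x y ≤ (2 : ℝ≥0∞) ^ (p - 1) * (A x + A y) * k (y - x) := by
    intro x y hd
    have hd0 : 0 < dist y x := lt_of_lt_of_le hσm hd
    have hdα : 0 < dist y x ^ α := Real.rpow_pos_of_pos hd0 _
    have hky : k (y - x) = ENNReal.ofReal ((dist y x ^ α)⁻¹) := by
      have hmem : (y - x) ∈ {z : EuclideanSpace ℝ (Fin N) | σm ≤ ‖z‖} := by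
        simpa [dist_eq_norm] using hd
      simp only [hk, ker, Set.indicator_of_mem hmem, ← dist_eq_norm]
    have hb : ENNReal.ofReal (|f y - f x| ^ p)
        ≤ (2 : ℝ≥0∞) ^ (p - 1) * (A x + A y) := by
      have h1 : ENNReal.ofReal (|f y - f x| ^ p) = ENNReal.ofReal (|f y - f x|) ^ p :=
        (ENNReal.ofReal_rpow_of_nonneg (abs_nonneg _) hp0.le).symm
      have h2 : ENNReal.ofReal (|f y - f x|)
          ≤ ENNReal.ofReal (|f x|) + ENNReal.ofReal (|f y|) := by
        rw [← ENNReal.ofReal_add (abs_nonneg _) (abs_nonneg _)]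
        apply ENNReal.ofReal_le_ofReal
        have h3 := abs_sub (f y) (f x)
        linarith
      calc ENNReal.ofReal (|f y - f x| ^ p)
          = ENNReal.ofReal (|f y - f x|) ^ p := h1
        _ ≤ (ENNReal.ofReal (|f x|) + ENNReal.ofReal (|f y|)) ^ p :=
            ENNReal.rpow_le_rpow h2 hp0.le
        _ ≤ (2 : ℝ≥0∞) ^ (p - 1)
              * (ENNReal.ofReal (|f x|) ^ p + ENNReal.ofReal (|f y|) ^ p) :=
            ENNReal.rpow_add_le_mul_rpow_add_rpow _ _ hp
        _ = (2 : ℝ≥0∞) ^ (p - 1) * (A x + A y) := by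
            rw [hA]
            rw [ENNReal.ofReal_rpow_of_nonneg (abs_nonneg _) hp0.le,
              ENNReal.ofReal_rpow_of_nonneg (abs_nonneg _) hp0.le]
    calc g x y = ENNReal.ofReal (|f y - f x| ^ p) * ENNReal.ofReal ((dist y x ^ α)⁻¹) := by
          rw [hg]
          simp only [div_eq_mul_inv]
          rw [ENNReal.ofReal_mul (Real.rpow_nonneg (abs_nonneg _) p)]
      _ = ENNReal.ofReal (|f y - f x| ^ p) * k (y - x) := by rw [hky]
      _ ≤ (2 : ℝ≥0∞) ^ (p - 1) * (A x + A y) * k (y - x) := mul_le_mul_left hb _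
  -- translation invariance
  have hker1 : ∀ x : EuclideanSpace ℝ (Fin N), (∫⁻ y, k (y - x)) = C₀ := fun x =>
    lintegral_sub_right_eq_self k x
  have hker2 : ∀ y : EuclideanSpace ℝ (Fin N), (∫⁻ x, k (y - x)) = C₀ := by
    intro y
    have hsymm : (fun x => k (y - x)) = fun x => k (x - y) := by
      funext x
      rw [show y - x = -(x - y) by abel, hk, ker_neg]
    rw [hsymm]
    exact lintegral_sub_right_eq_self k y
  set W : EuclideanSpace ℝ (Fin N) → ℝ≥0∞ := fun x => ∫⁻ y in U, A y * k (y - x) with hW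
  have hprodmeas : Measurable fun q : EuclideanSpace ℝ (Fin N) × EuclideanSpace ℝ (Fin N) =>
      A q.2 * k (q.2 - q.1) :=
    (hAmeas.comp measurable_snd).mul (hkmeas.comp (measurable_snd.sub measurable_fst))
  have hWmeas : Measurable W := Measurable.lintegral_prod_right hprodmeas
  -- per-x estimate
  have hxest : ∀ x ∈ U, (∫⁻ y in U, g x y)
      ≤ (∫⁻ y in U ∩ {y | edist y x < σ x}, g x y)
        + (2 : ℝ≥0∞) ^ (p - 1) * (A x * C₀ + W x) := by
    intro x hxU
    have hsplit : (∫⁻ y in U, g x y)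
        = (∫⁻ y in U ∩ ball x σm, g x y) + ∫⁻ y in U \ ball x σm, g x y :=
      (lintegral_inter_add_diff _ U measurableSet_ball).symm
    rw [hsplit]
    apply add_le_add
    · apply lintegral_mono_set
      rintro y ⟨hyU, hyb⟩
      refine ⟨hyU, lt_of_lt_of_le ?_ (hσlb x hxU)⟩
      rw [edist_lt_ofReal]
      exact mem_ball.mp hyb
    · calc ∫⁻ y in U \ ball x σm, g x y
          ≤ ∫⁻ y in U \ ball x σm,
              (2 : ℝ≥0∞) ^ (p - 1) * (A x + A y) * k (y - x) := by
            apply setLIntegral_mono (by fun_prop)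
            intro y hy
            refine hpt x y (le_of_not_gt fun h => hy.2 (mem_ball.mpr h))
        _ = ∫⁻ y in U \ ball x σm,
              (((2 : ℝ≥0∞) ^ (p - 1) * A x) * k (y - x)
                + (2 : ℝ≥0∞) ^ (p - 1) * (A y * k (y - x))) := by
            apply lintegral_congr
            intro y
            ring
        _ = (∫⁻ y in U \ ball x σm, ((2 : ℝ≥0∞) ^ (p - 1) * A x) * k (y - x))
            + ∫⁻ y in U \ ball x σm, (2 : ℝ≥0∞) ^ (p - 1) * (A y * k (y - x)) := by
            apply lintegral_add_left (by fun_prop)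
        _ ≤ (2 : ℝ≥0∞) ^ (p - 1) * (A x * C₀ + W x) := by
            rw [mul_add]
            apply add_le_add
            · rw [lintegral_const_mul _ (by fun_prop : Measurable fun y => k (y - x))]
              rw [mul_assoc]
              apply mul_le_mul_right
              apply mul_le_mul_right
              exact (setLIntegral_le_lintegral _ _).trans (hker1 x).le
            · rw [lintegral_const_mul _ (by fun_prop : Measurable fun y => A y * k (y - x))]
              apply mul_le_mul_right
              exact lintegral_mono_set diff_subset
  -- integrate the per-x estimate
  calc (∫⁻ x in U, ∫⁻ y in U, g x y)
      ≤ ∫⁻ x in U, ((∫⁻ y in U ∩ {y | edist y x < σ x}, g x y)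
          + (2 : ℝ≥0∞) ^ (p - 1) * (A x * C₀ + W x)) := by
        apply lintegral_mono_ae
        filter_upwards [ae_restrict_mem hU] with x hx using hxest x hx
    _ = (∫⁻ x in U, ∫⁻ y in U ∩ {y | edist y x < σ x}, g x y)
        + ∫⁻ x in U, (2 : ℝ≥0∞) ^ (p - 1) * (A x * C₀ + W x) := by
        apply lintegral_add_right _ (by fun_prop)
    _ ≤ (∫⁻ x in U, ∫⁻ y in U ∩ {y | edist y x < σ x}, g x y)
        + 2 * (2 : ℝ≥0∞) ^ (p - 1) * C₀ * L := by
        apply add_le_add_right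
        have hints : ∫⁻ x in U, (2 : ℝ≥0∞) ^ (p - 1) * (A x * C₀ + W x)
            = (2 : ℝ≥0∞) ^ (p - 1) * ((∫⁻ x in U, A x * C₀) + ∫⁻ x in U, W x) := by
          rw [lintegral_const_mul _ (by fun_prop)]
          congr 1
          exact lintegral_add_left (by fun_prop) _
        rw [hints]
        have h1 : (∫⁻ x in U, A x * C₀) = L * C₀ := lintegral_mul_const _ hAmeas
        have h2 : (∫⁻ x in U, W x) ≤ C₀ * L := by
          have hswap : (∫⁻ x in U, W x)
              = ∫⁻ y in U, ∫⁻ x in U, A y * k (y - x) :=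
            lintegral_lintegral_swap hprodmeas.aemeasurable
          rw [hswap]
          calc (∫⁻ y in U, ∫⁻ x in U, A y * k (y - x))
              = ∫⁻ y in U, A y * ∫⁻ x in U, k (y - x) := by
                apply lintegral_congr
                intro y
                exact lintegral_const_mul _ (by fun_prop)
            _ ≤ ∫⁻ y in U, A y * C₀ := by
                apply lintegral_mono
                intro y
                exact mul_le_mul_right ((setLIntegral_le_lintegral _ _).trans (hker2 y).le) _
            _ = L * C₀ := lintegral_mul_const _ hAmeas
            _ = C₀ * L := mul_comm _ _
        calc (2 : ℝ≥0∞) ^ (p - 1) * ((∫⁻ x in U, A x * C₀) + ∫⁻ x in U, W x)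
            ≤ (2 : ℝ≥0∞) ^ (p - 1) * (L * C₀ + C₀ * L) := by
              rw [h1]
              exact mul_le_mul_right (add_le_add_right h2 _) _
          _ = 2 * (2 : ℝ≥0∞) ^ (p - 1) * C₀ * L := by ring

end Statement10Aux

/-- Let `U ⊆ ℝ^N` be open, `1 ≤ p < ∞`, `0 < s < 1`, and `σ` a
screening function bounded below by `σ₋ > 0` on `U`.  Then there is
`c = c(N,s,p,σ₋) > 0` such that for every `f ∈ L¹_loc(U)`:
`‖f‖_{L^p(U)} + |f|_{W̃^{s,p}_{(σ)}(U)} ≤ ‖f‖_{L^p(U)} + |f|_{Ẇ^{s,p}(U)}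
  ≤ c (‖f‖_{L^p(U)} + |f|_{W̃^{s,p}_{(σ)}(U)})`. -/
theorem statement10 (N : ℕ) (U : Set (EuclideanSpace ℝ (Fin N))) (hU : IsOpen U)
    (p s : ℝ) (hp : 1 ≤ p) (hs0 : 0 < s) (hs1 : s < 1)
    (σ : EuclideanSpace ℝ (Fin N) → ℝ≥0∞)
    (hσlsc : LowerSemicontinuousOn σ U) (hσpos : ∀ x ∈ U, 0 < σ x)
    (σm : ℝ) (hσm : 0 < σm) (hσlb : ∀ x ∈ U, ENNReal.ofReal σm ≤ σ x) :
    ∃ c : ℝ, 0 < c ∧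
      ∀ f : EuclideanSpace ℝ (Fin N) → ℝ, LocallyIntegrableOn f U →
        (lpNormOn N p U f + screenedSeminorm N s p U σ f
            ≤ lpNormOn N p U f + screenedSeminorm N s p U (fun _ => ⊤) f) ∧
        (lpNormOn N p U f + screenedSeminorm N s p U (fun _ => ⊤) f
            ≤ ENNReal.ofReal c *
              (lpNormOn N p U f + screenedSeminorm N s p U σ f)) := by
  have hp0 : (0 : ℝ) < p := lt_of_lt_of_le one_pos hp
  have hq0 : (0 : ℝ) ≤ 1 / p := by positivity
  have hq1 : 1 / p ≤ 1 := by rw [div_le_one hp0]; exact hp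
  have hαN : (N : ℝ) < s * p + N := by
    have h := mul_pos hs0 hp0
    linarith
  set C₀ : ℝ≥0∞ := ∫⁻ z : EuclideanSpace ℝ (Fin N), Statement10Aux.ker N (s * p + N) σm z
    with hC₀
  have hC₀top : C₀ ≠ ∞ := (Statement10Aux.ker_integral_lt_top hσm hαN).ne
  set K : ℝ≥0∞ := 2 * (2 : ℝ≥0∞) ^ (p - 1) * C₀ with hK
  have hKtop : K ≠ ∞ := by
    apply ENNReal.mul_ne_top _ hC₀top
    apply ENNReal.mul_ne_top (by simp)
    exact ENNReal.rpow_ne_top_of_nonneg (by linarith) (by simp)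
  set M : ℝ≥0∞ := ENNReal.ofReal (max 1 K.toReal) with hM
  have hKM : K ≤ M := by
    conv_lhs => rw [← ENNReal.ofReal_toReal hKtop]
    exact ENNReal.ofReal_le_ofReal (le_max_right _ _)
  have hM1 : (1 : ℝ≥0∞) ≤ M := by
    rw [hM, ENNReal.one_le_ofReal]
    exact le_max_left _ _
  have hMtop : M ≠ ∞ := ENNReal.ofReal_ne_top
  refine ⟨1 + max 1 K.toReal, by positivity, ?_⟩
  intro f hf
  have hfsm := hf.aestronglyMeasurable
  set f' := hfsm.mk f with hf'def
  have hf'm : Measurable f' := hfsm.stronglyMeasurable_mk.measurable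
  have heq : f =ᵐ[volume.restrict U] f' := hfsm.ae_eq_mk
  have hUniv : ∀ x : EuclideanSpace ℝ (Fin N),
      U ∩ {y | edist y x < (⊤ : ℝ≥0∞)} = U := by
    intro x; ext y; simp [edist_lt_top]
  constructor
  · -- easy direction
    apply add_le_add_right
    unfold screenedSeminorm
    apply ENNReal.rpow_le_rpow _ hq0
    apply lintegral_mono
    intro x
    apply lintegral_mono_set
    intro y hy
    exact ⟨hy.1, edist_lt_top y x⟩
  · -- hard direction
    set Sl : ℝ≥0∞ := ∫⁻ x in U, ∫⁻ y in U ∩ {y | edist y x < σ x},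
        ENNReal.ofReal (|f y - f x| ^ p / dist y x ^ (s * p + N)) with hSl
    set Ll : ℝ≥0∞ := ∫⁻ x in U, ENNReal.ofReal (|f x| ^ p) with hLl
    set Fl : ℝ≥0∞ := ∫⁻ x in U, ∫⁻ y in U,
        ENNReal.ofReal (|f y - f x| ^ p / dist y x ^ (s * p + N)) with hFl
    have hLeq : Ll = ∫⁻ x in U, ENNReal.ofReal (|f' x| ^ p) := by
      apply lintegral_congr_ae
      filter_upwards [heq] with x hx
      rw [hx]
    have hS' : Sl = ∫⁻ x in U, ∫⁻ y in U ∩ {y | edist y x < σ x},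
        ENNReal.ofReal (|f' y - f' x| ^ p / dist y x ^ (s * p + N)) := by
      apply lintegral_congr_ae
      filter_upwards [heq] with x hx
      apply lintegral_congr_ae
      filter_upwards [ae_restrict_of_ae_restrict_of_subset inter_subset_left heq] with y hy
      rw [hx, hy]
    have hF' : Fl = ∫⁻ x in U, ∫⁻ y in U,
        ENNReal.ofReal (|f' y - f' x| ^ p / dist y x ^ (s * p + N)) := by
      apply lintegral_congr_ae
      filter_upwards [heq] with x hx
      apply lintegral_congr_ae
      filter_upwards [heq] with y hy
      rw [hx, hy]
    have hFS : Fl ≤ Sl + K * Ll := by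
      calc Fl = ∫⁻ x in U, ∫⁻ y in U,
            ENNReal.ofReal (|f' y - f' x| ^ p / dist y x ^ (s * p + N)) := hF'
        _ ≤ (∫⁻ x in U, ∫⁻ y in U ∩ {y | edist y x < σ x},
              ENNReal.ofReal (|f' y - f' x| ^ p / dist y x ^ (s * p + N)))
            + 2 * (2 : ℝ≥0∞) ^ (p - 1) * C₀ * ∫⁻ x in U, ENNReal.ofReal (|f' x| ^ p) :=
            Statement10Aux.key hU.measurableSet hp hσm hσlb hf'm
        _ = Sl + K * Ll := by rw [← hS', ← hLeq, hK]
    have hScreened : screenedSeminorm N s p U (fun _ => ⊤) f = Fl ^ (1 / p) := by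
      unfold screenedSeminorm
      congr 1
      apply lintegral_congr
      intro x
      rw [hUniv x]
    have hScreenedσ : screenedSeminorm N s p U σ f = Sl ^ (1 / p) := rfl
    have hLp : lpNormOn N p U f = Ll ^ (1 / p) := rfl
    rw [hScreened, hScreenedσ, hLp]
    have hofReal : ENNReal.ofReal (1 + max 1 K.toReal) = 1 + M := by
      rw [ENNReal.ofReal_add zero_le_one (by positivity), ENNReal.ofReal_one]
    rw [hofReal]
    calc Ll ^ (1 / p) + Fl ^ (1 / p)
        ≤ Ll ^ (1 / p) + (Sl + M * Ll) ^ (1 / p) := by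
          apply add_le_add_right
          apply ENNReal.rpow_le_rpow _ hq0
          exact hFS.trans (add_le_add_right (mul_le_mul_left hKM _) _)
      _ ≤ Ll ^ (1 / p) + (Sl ^ (1 / p) + (M * Ll) ^ (1 / p)) := by
          apply add_le_add_right
          exact ENNReal.rpow_add_le_add_rpow _ _ hq0 hq1
      _ = Ll ^ (1 / p) + Sl ^ (1 / p) + M ^ (1 / p) * Ll ^ (1 / p) := by
          rw [ENNReal.mul_rpow_of_nonneg _ _ hq0]
          ring
      _ ≤ Ll ^ (1 / p) + Sl ^ (1 / p) + M * Ll ^ (1 / p) := by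
          apply add_le_add_right
          apply mul_le_mul_left
          calc M ^ (1 / p) ≤ M ^ (1 : ℝ) := ENNReal.rpow_le_rpow_of_exponent_le hM1 hq1
            _ = M := ENNReal.rpow_one M
      _ ≤ (1 + M) * (Ll ^ (1 / p) + Sl ^ (1 / p)) := by
          rw [add_mul, one_mul]
          apply add_le_add_right
          exact mul_le_mul_right le_self_add _
end
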